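/- On (ℂ²)^{⊗4}, the 2×2 plaquette operator ⊞(S^±) = S^±⊗K⁺⊗K⁻⊗K⁻ + K⁻⊗S^±⊗K⁻⊗K⁻ + K⁺⊗K⁺⊗S^±⊗K⁺ + K⁺⊗K⁺⊗K⁻⊗S^± annihilates both |s⟩_q⊗|s⟩_q (singlets on sites (1,2) and (3,4)) and the crossed singlet state with singlets on pairs (3,2) and (4,1): ⊞(S^±)(α |s⟩_q^{(1,2)}|s⟩_q^{(3,4)} + β |s⟩_q^{(3,2)}|s⟩_q^{(4,1)}) = 0 for all α, β ∈ ℂ. -/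

import Mathlib

open TensorProduct

noncomputable section

/-- Single-site state space `ℂ²`. -/
abbrev V2 : Type := Fin 2 → ℂ

/-- The three-site state space `(ℂ²)^{⊗3}`. -/
abbrev V3 : Type := V2 ⊗[ℂ] (V2 ⊗[ℂ] V2)

instance : AddCommGroup V3 := inferInstance
instance : Module ℂ V3 := inferInstance

/-- The four-site state space `(ℂ²)^{⊗4}`. -/
abbrev V4 : Type := V2 ⊗[ℂ] V3

instance : AddCommGroup V4 := inferInstance
instance : Module ℂ V4 := inferInstance

/-- Four 2×2 matrices acting as `A ⊗ B ⊗ C ⊗ D` on `(ℂ²)^{⊗4}`. -/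
def op4L (A B C D : Matrix (Fin 2) (Fin 2) ℂ) : V4 →ₗ[ℂ] V4 :=
  TensorProduct.map (Matrix.toLin' A)
    (TensorProduct.map (Matrix.toLin' B)
      (TensorProduct.map (Matrix.toLin' C) (Matrix.toLin' D)))

/-- The product basis vector `|abcd⟩` of `(ℂ²)^{⊗4}`. -/
def e4 (a b c d : Fin 2) : V4 :=
  Pi.single a 1 ⊗ₜ[ℂ] (Pi.single b 1 ⊗ₜ[ℂ] (Pi.single c 1 ⊗ₜ[ℂ] Pi.single d 1))

set_option synthInstance.maxHeartbeats 400000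

lemma toLin'_single2 (M : Matrix (Fin 2) (Fin 2) ℂ) (j : Fin 2) :
    Matrix.toLin' M (Pi.single j 1) =
      M 0 j • (Pi.single 0 1 : V2) + M 1 j • (Pi.single 1 1 : V2) := by
  funext i
  fin_cases i <;>
    simp [Matrix.toLin'_apply, Matrix.mulVec, dotProduct, Pi.single_apply,
      Fin.sum_univ_two]

section actions
variable (s : ℂ)

lemma Sp0 : Matrix.toLin' (Matrix.single 0 1 1 : Matrix (Fin 2) (Fin 2) ℂ)
    (Pi.single 0 1) = (0 : V2) := by
  rw [toLin'_single2]; simp [Matrix.single]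
lemma Sp1 : Matrix.toLin' (Matrix.single 0 1 1 : Matrix (Fin 2) (Fin 2) ℂ)
    (Pi.single 1 1) = (Pi.single 0 1 : V2) := by
  rw [toLin'_single2]; simp [Matrix.single]
lemma Sm0 : Matrix.toLin' (Matrix.single 1 0 1 : Matrix (Fin 2) (Fin 2) ℂ)
    (Pi.single 0 1) = (Pi.single 1 1 : V2) := by
  rw [toLin'_single2]; simp [Matrix.single]
lemma Sm1 : Matrix.toLin' (Matrix.single 1 0 1 : Matrix (Fin 2) (Fin 2) ℂ)
    (Pi.single 1 1) = (0 : V2) := by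
  rw [toLin'_single2]; simp [Matrix.single]
lemma K0 (u v : ℂ) : Matrix.toLin' (Matrix.diagonal ![u, v])
    (Pi.single 0 1) = u • (Pi.single 0 1 : V2) := by
  rw [toLin'_single2]; simp [Matrix.diagonal_apply]
lemma K1 (u v : ℂ) : Matrix.toLin' (Matrix.diagonal ![u, v])
    (Pi.single 1 1) = v • (Pi.single 1 1 : V2) := by
  rw [toLin'_single2]; simp [Matrix.diagonal_apply]
end actions

section states
variable (s : ℂ)

/-- abbreviations for the four matrices -/
private def SpM : Matrix (Fin 2) (Fin 2) ℂ := Matrix.single 0 1 1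
private def SmM : Matrix (Fin 2) (Fin 2) ℂ := Matrix.single 1 0 1
private def KpM (s : ℂ) : Matrix (Fin 2) (Fin 2) ℂ := Matrix.diagonal ![s, s⁻¹]
private def KmM (s : ℂ) : Matrix (Fin 2) (Fin 2) ℂ := Matrix.diagonal ![s⁻¹, s]

private def plaqL (S : Matrix (Fin 2) (Fin 2) ℂ) (s : ℂ) : V4 →ₗ[ℂ] V4 :=
  op4L S (KpM s) (KmM s) (KmM s) + op4L (KmM s) S (KmM s) (KmM s)
    + op4L (KpM s) (KpM s) S (KpM s) + op4L (KpM s) (KpM s) (KmM s) S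

private def st1 (s : ℂ) : V4 :=
  s ^ 2 • e4 0 1 0 1 - e4 0 1 1 0 - e4 1 0 0 1 + s⁻¹ ^ 2 • e4 1 0 1 0

private def st2 (s : ℂ) : V4 :=
  s ^ 2 • e4 1 1 0 0 - e4 0 1 0 1 - e4 1 0 1 0 + s⁻¹ ^ 2 • e4 0 0 1 1

private lemma plaq_Sp_st1 (hs0 : s ≠ 0) : plaqL SpM s (st1 s) = 0 := by
  simp only [plaqL, st1, SpM, KpM, KmM, map_add, map_sub, map_smul, LinearMap.add_apply,
    op4L, e4, TensorProduct.map_tmul, Sp0, Sp1, Sm0, Sm1, K0, K1,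
    ← smul_tmul', tmul_smul, zero_tmul, tmul_zero, smul_zero, smul_smul]
  match_scalars <;> field_simp <;> try ring

private lemma plaq_Sm_st1 (hs0 : s ≠ 0) : plaqL SmM s (st1 s) = 0 := by
  simp only [plaqL, st1, SmM, KpM, KmM, map_add, map_sub, map_smul, LinearMap.add_apply,
    op4L, e4, TensorProduct.map_tmul, Sp0, Sp1, Sm0, Sm1, K0, K1,
    ← smul_tmul', tmul_smul, zero_tmul, tmul_zero, smul_zero, smul_smul]
  match_scalars <;> field_simp <;> try ring

private lemma plaq_Sp_st2 (hs0 : s ≠ 0) : plaqL SpM s (st2 s) = 0 := by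
  simp only [plaqL, st2, SpM, KpM, KmM, map_add, map_sub, map_smul, LinearMap.add_apply,
    op4L, e4, TensorProduct.map_tmul, Sp0, Sp1, Sm0, Sm1, K0, K1,
    ← smul_tmul', tmul_smul, zero_tmul, tmul_zero, smul_zero, smul_smul]
  match_scalars <;> field_simp <;> try ring

private lemma plaq_Sm_st2 (hs0 : s ≠ 0) : plaqL SmM s (st2 s) = 0 := by
  simp only [plaqL, st2, SmM, KpM, KmM, map_add, map_sub, map_smul, LinearMap.add_apply,
    op4L, e4, TensorProduct.map_tmul, Sp0, Sp1, Sm0, Sm1, K0, K1,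
    ← smul_tmul', tmul_smul, zero_tmul, tmul_zero, smul_zero, smul_smul]
  match_scalars <;> field_simp <;> try ring

end states

/-- The 2×2 plaquette operator `⊞(S^±)` annihilates every linear combination of the
horizontal two-singlet state `|s⟩_q^{(1,2)}|s⟩_q^{(3,4)}` and the crossed two-singlet
state `|s⟩_q^{(3,2)}|s⟩_q^{(4,1)}` (with `s = q^{1/2}`). -/
theorem plaquette_annihilates_singlets
    (q s : ℂ) (hq0 : q ≠ 0) (hq2 : q ^ 2 ≠ 1) (hs : s ^ 2 = q) :
    let Sp : Matrix (Fin 2) (Fin 2) ℂ := Matrix.single 0 1 1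
    let Sm : Matrix (Fin 2) (Fin 2) ℂ := Matrix.single 1 0 1
    let Kp : Matrix (Fin 2) (Fin 2) ℂ := Matrix.diagonal ![s, s⁻¹]
    let Km : Matrix (Fin 2) (Fin 2) ℂ := Matrix.diagonal ![s⁻¹, s]
    -- ⊞(S) = S⊗K⁺⊗K⁻⊗K⁻ + K⁻⊗S⊗K⁻⊗K⁻ + K⁺⊗K⁺⊗S⊗K⁺ + K⁺⊗K⁺⊗K⁻⊗S
    let plaq : Matrix (Fin 2) (Fin 2) ℂ → (V4 →ₗ[ℂ] V4) := fun S =>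
      op4L S Kp Km Km + op4L Km S Km Km + op4L Kp Kp S Kp + op4L Kp Kp Km S
    -- |s⟩_q^{(1,2)} |s⟩_q^{(3,4)} = (s|01⟩ − s⁻¹|10⟩)₍₁₂₎ ⊗ (s|01⟩ − s⁻¹|10⟩)₍₃₄₎
    let state1 : V4 :=
      s ^ 2 • e4 0 1 0 1 - e4 0 1 1 0 - e4 1 0 0 1 + s⁻¹ ^ 2 • e4 1 0 1 0
    -- |s⟩_q^{(3,2)} |s⟩_q^{(4,1)} (crossed singlets)
    let state2 : V4 :=
      s ^ 2 • e4 1 1 0 0 - e4 0 1 0 1 - e4 1 0 1 0 + s⁻¹ ^ 2 • e4 0 0 1 1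
    ∀ α β : ℂ,
      plaq Sp (α • state1 + β • state2) = 0 ∧ plaq Sm (α • state1 + β • state2) = 0 := by
  intro Sp Sm Kp Km plaq state1 state2 α β
  have hs0 : s ≠ 0 := by
    intro h; apply hq0; rw [← hs, h]; ring
  have e1 : plaq Sp = plaqL SpM s := rfl
  have e2 : plaq Sm = plaqL SmM s := rfl
  have f1 : state1 = st1 s := rfl
  have f2 : state2 = st2 s := rfl
  rw [e1, e2, f1, f2]
  constructor <;>
  · rw [map_add, map_smul, map_smul]
    first
    | rw [plaq_Sp_st1 s hs0, plaq_Sp_st2 s hs0]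
    | rw [plaq_Sm_st1 s hs0, plaq_Sm_st2 s hs0]
    simp
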